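/- arXiv:1404.1417 — 3 statements merged into one kernel-verified Lean document; each statement's English description precedes it below -/
import Mathlib

section
/- For every surjection α : I → J of nonempty finite types, the map d_α is well defined (i.e., for t : I → ℝ with min_{i∈I} t_i = 0, one has min_{j∈J} v_j = 0 and, for every j ∈ J, min_{i∈I_j} u_{j,i} = 0) and d_α is a homeomorphism; its inverse sends ((v_j)_{j∈J}, (u_{j,i})_{j∈J, i∈I_j}) to the tuple t ∈ ℝ^I_0 given by t_i = u_{α(i),i} + v_{α(i)}. -/
open Set

private lemma aux_ciInf_add {ι : Type} [Fintype ι] [Nonempty ι] (f : ι → ℝ) (c : ℝ) :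
    (⨅ i, (f i + c)) = (⨅ i, f i) + c := by
  simpa using ((OrderIso.addRight c).map_ciInf (Finite.bddBelow_range f)).symm

private lemma aux_ciInf_sub {ι : Type} [Fintype ι] [Nonempty ι] (f : ι → ℝ) (c : ℝ) :
    (⨅ i, (f i - c)) = (⨅ i, f i) - c := by
  simp only [sub_eq_add_neg]; exact aux_ciInf_add f (-c)

private lemma aux_cont_iInf {ι X : Type} [Fintype ι] [Nonempty ι] [TopologicalSpace X]
    {f : ι → X → ℝ} (hf : ∀ i, Continuous (f i)) : Continuous fun x => ⨅ i, f i x := by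
  simp only [← Finset.inf'_univ_eq_ciInf]
  exact Continuous.finset_inf'_apply _ (fun i _ => (hf i))

private lemma aux_split {I J : Type} [Fintype I] [Fintype J] [Nonempty I] [Nonempty J]
    (α : I → J) (hα : Function.Surjective α) (t : I → ℝ) :
    (⨅ i, t i) = ⨅ j : J, ⨅ i : {i : I // α i = j}, t i.1 := by
  haveI : ∀ j : J, Nonempty {i : I // α i = j} := fun j => nonempty_subtype.mpr (hα j)
  apply le_antisymm
  · exact le_ciInf fun j => le_ciInf fun i => ciInf_le (Finite.bddBelow_range t) i.1
  · exact le_ciInf fun i =>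
      le_trans (ciInf_le (Finite.bddBelow_range _) (α i))
        (ciInf_le (Finite.bddBelow_range _) (⟨i, rfl⟩ : {i' : I // α i' = α i}))

/-- For every surjection `α : I → J` of nonempty finite types, the cooperad structure map
`d_α` on `ℝ^I_0 = {t : I → ℝ | min_i t_i = 0}`, sending `t` to `((v_j)_j, ((u_{j,i})_i)_j)`
with `v_j = min_{i ∈ α⁻¹ j} t_i` and `u_{j,i} = t_i - v_j`, is well defined and a
homeomorphism, with inverse `((v_j), (u_{j,i})) ↦ (u_{α i, i} + v_{α i})_i`. -/
theorem cooperad_structure_map_is_homeomorphism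
    {I J : Type} [Fintype I] [Fintype J] [Nonempty I] [Nonempty J]
    (α : I → J) (hα : Function.Surjective α) :
    (∀ t : I → ℝ, (⨅ i, t i) = 0 →
      ((⨅ j : J, ⨅ i : {i : I // α i = j}, t i.1) = 0 ∧
        ∀ j : J, (⨅ i : {i : I // α i = j},
          (t i.1 - ⨅ i' : {i' : I // α i' = j}, t i'.1)) = 0)) ∧
    ∃ e : {t : I → ℝ // (⨅ i, t i) = 0} ≃ₜ
        ({v : J → ℝ // (⨅ j, v j) = 0} ×
          ((j : J) → {u : {i : I // α i = j} → ℝ // (⨅ i, u i) = 0})),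
      (∀ t : {t : I → ℝ // (⨅ i, t i) = 0},
        ((e t).1 : J → ℝ) = fun j => ⨅ i : {i : I // α i = j}, (t : I → ℝ) i.1) ∧
      (∀ (t : {t : I → ℝ // (⨅ i, t i) = 0}) (j : J),
        ((e t).2 j : {i : I // α i = j} → ℝ) =
          fun i => (t : I → ℝ) i.1 - ⨅ i' : {i' : I // α i' = j}, (t : I → ℝ) i'.1) ∧
      (∀ p : {v : J → ℝ // (⨅ j, v j) = 0} ×
          ((j : J) → {u : {i : I // α i = j} → ℝ // (⨅ i, u i) = 0}),
        (e.symm p : I → ℝ) =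
          fun i => (p.2 (α i) : {i' : I // α i' = α i} → ℝ) ⟨i, rfl⟩ + (p.1 : J → ℝ) (α i)) := by
  classical
  haveI : ∀ j : J, Nonempty {i : I // α i = j} := fun j => nonempty_subtype.mpr (hα j)
  -- well-definedness facts
  have hwd : ∀ t : I → ℝ, (⨅ i, t i) = 0 →
      ((⨅ j : J, ⨅ i : {i : I // α i = j}, t i.1) = 0 ∧
        ∀ j : J, (⨅ i : {i : I // α i = j},
          (t i.1 - ⨅ i' : {i' : I // α i' = j}, t i'.1)) = 0) := by
    intro t ht
    refine ⟨(aux_split α hα t).symm.trans ht, fun j => ?_⟩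
    rw [aux_ciInf_sub (fun i : {i : I // α i = j} => t i.1)
      (⨅ i' : {i' : I // α i' = j}, t i'.1), sub_self]
  refine ⟨hwd, ?_⟩
  -- the key computation for the inverse direction
  have key : ∀ (p : {v : J → ℝ // (⨅ j, v j) = 0} ×
        ((j : J) → {u : {i : I // α i = j} → ℝ // (⨅ i, u i) = 0})) (j : J),
      (⨅ i : {i : I // α i = j},
        ((p.2 (α i.1) : {i' : I // α i' = α i.1} → ℝ) ⟨i.1, rfl⟩ + (p.1 : J → ℝ) (α i.1)))
        = (p.1 : J → ℝ) j := by
    intro p j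
    have hfun : (fun i : {i : I // α i = j} =>
        (p.2 (α i.1) : {i' : I // α i' = α i.1} → ℝ) ⟨i.1, rfl⟩ + (p.1 : J → ℝ) (α i.1))
        = fun i : {i : I // α i = j} => (p.2 j : {i' : I // α i' = j} → ℝ) i + (p.1 : J → ℝ) j := by
      funext i
      obtain ⟨i, hi⟩ := i
      subst hi
      rfl
    rw [hfun, aux_ciInf_add ((p.2 j : {i' : I // α i' = j} → ℝ)) ((p.1 : J → ℝ) j),
      (p.2 j).2, zero_add]
  -- forward map
  let F : {t : I → ℝ // (⨅ i, t i) = 0} →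
      ({v : J → ℝ // (⨅ j, v j) = 0} ×
        ((j : J) → {u : {i : I // α i = j} → ℝ // (⨅ i, u i) = 0})) :=
    fun t => ⟨⟨fun j => ⨅ i : {i : I // α i = j}, (t : I → ℝ) i.1, (hwd t.1 t.2).1⟩,
      fun j => ⟨fun i => (t : I → ℝ) i.1 - ⨅ i' : {i' : I // α i' = j}, (t : I → ℝ) i'.1,
        (hwd t.1 t.2).2 j⟩⟩
  -- inverse map
  let G : ({v : J → ℝ // (⨅ j, v j) = 0} ×
        ((j : J) → {u : {i : I // α i = j} → ℝ // (⨅ i, u i) = 0})) →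
      {t : I → ℝ // (⨅ i, t i) = 0} :=
    fun p => ⟨fun i => (p.2 (α i) : {i' : I // α i' = α i} → ℝ) ⟨i, rfl⟩ + (p.1 : J → ℝ) (α i),
      by
        rw [aux_split α hα]
        have : (fun j : J => ⨅ i : {i : I // α i = j},
            ((p.2 (α i.1) : {i' : I // α i' = α i.1} → ℝ) ⟨i.1, rfl⟩ + (p.1 : J → ℝ) (α i.1)))
            = fun j => (p.1 : J → ℝ) j := funext fun j => key p j
        rw [this]
        exact p.1.2⟩
  have hGF : ∀ t, G (F t) = t := by
    intro t
    apply Subtype.ext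
    funext i
    simp only [F, G]
    exact sub_add_cancel _ _
  have hFG : ∀ p, F (G p) = p := by
    intro p
    have hv : ∀ j : J, (⨅ i : {i : I // α i = j}, (G p : I → ℝ) i.1) = (p.1 : J → ℝ) j :=
      fun j => key p j
    refine Prod.ext (Subtype.ext (funext fun j => hv j)) ?_
    funext j
    apply Subtype.ext
    funext i
    show (G p : I → ℝ) i.1 - (⨅ i' : {i' : I // α i' = j}, (G p : I → ℝ) i'.1)
        = (p.2 j : {i' : I // α i' = j} → ℝ) i
    rw [hv j]
    obtain ⟨i, hi⟩ := i
    subst hi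
    exact add_sub_cancel_right _ _
  have hFc : Continuous F := by
    apply Continuous.prodMk
    · apply Continuous.subtype_mk
      apply continuous_pi
      intro j
      exact aux_cont_iInf fun i => (continuous_apply i.1).comp continuous_subtype_val
    · apply continuous_pi
      intro j
      apply Continuous.subtype_mk
      apply continuous_pi
      intro i
      exact ((continuous_apply i.1).comp continuous_subtype_val).sub
        (aux_cont_iInf fun i' => (continuous_apply i'.1).comp continuous_subtype_val)
  have hGc : Continuous G := by
    apply Continuous.subtype_mk
    apply continuous_pi
    intro i
    refine Continuous.add ?_ ?_
    · exact (continuous_apply (⟨i, rfl⟩ : {i' : I // α i' = α i})).comp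
        (continuous_subtype_val.comp ((continuous_apply (α i)).comp continuous_snd))
    · exact (continuous_apply (α i)).comp (continuous_subtype_val.comp continuous_fst)
  refine ⟨⟨⟨F, G, hGF, hFG⟩, hFc, hGc⟩, fun t => rfl, fun t j => rfl, fun p => rfl⟩
end

section
/- For every integer j with 1 ≤ j ≤ N, the maps r commute with the j-th coface: let δ^j : Δ^{N−1} → Δ^N be the map (t_0, …, t_{N−1}) ↦ (t_0, …, t_{j−1}, 0, t_j, …, t_{N−1}). Form the N-tuple of vector spaces W_0, …, W_{N−1} with W_m = V_m for m < j−1, W_{j−1} = V_{j−1} × V_j, and W_m = V_{m+1} for m ≥ j, with subsets U'_m ⊆ W_m given correspondingly (U'_{j−1} = U_{j−1} × U_j, which is again closed under nonnegative scalar multiplication), and let c : U'_0 × ⋯ × U'_{N−1} → U_0 × ⋯ × U_N be the canonical reassociation bijection. Then for all t ∈ Δ^{N−1} and u' ∈ U'_0 × ⋯ × U'_{N−1}: r^N(δ^j(t), c(u')) = (c × c)(r^{N−1}(t, u')), where r^{N−1} is formed for the tuple U'_0, …, U'_{N−1}. -/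
universe u
/-- The map `r^n` of Definition 5.1 of Arone–Ching, for a tuple of real vector spaces:
its first tuple has `j`-th entry `(t_0 + ⋯ + t_j) • u_j` and its second tuple has `j`-th
entry `(t_{j+1} + ⋯ + t_{n-1}) • u_j` (so the last entry is `0`). -/
noncomputable def rmap {n : ℕ} (V : Fin n → ModuleCat.{u} ℝ)
    (t : Fin n → ℝ) (u : ∀ i, ↥(V i)) : (∀ i, ↥(V i)) × (∀ i, ↥(V i)) :=
  (fun k => (∑ m ∈ Finset.univ.filter (fun m => m ≤ k), t m) • u k,
   fun k => (∑ m ∈ Finset.univ.filter (fun m => k < m), t m) • u k)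

/-- The `j`-th coface map `δ^j : Δ^{N-1} → Δ^N`,
`(t_0, …, t_{N-1}) ↦ (t_0, …, t_{j-1}, 0, t_j, …, t_{N-1})`, written on coordinates. -/
def coface {N : ℕ} (j : ℕ) (hj : j ≤ N) (t : Fin N → ℝ) (i : Fin (N + 1)) : ℝ :=
  if h : i.val < j then t ⟨i.val, by omega⟩
  else if h' : i.val = j then 0
  else t ⟨i.val - 1, by have := i.isLt; omega⟩

/-- The `N`-tuple of vector spaces `W_0, …, W_{N-1}` obtained from `V_0, …, V_N` by
replacing the pair `(V_{j-1}, V_j)` by the product `V_{j-1} × V_j`: `W_m = V_m` for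
`m < j - 1`, `W_{j-1} = V_{j-1} × V_j`, and `W_m = V_{m+1}` for `m ≥ j`. -/
noncomputable def Wm {N : ℕ} (V : Fin (N + 1) → ModuleCat.{u} ℝ) (j : ℕ) (m : Fin N) :
    ModuleCat.{u} ℝ :=
  if m.val + 1 < j then V m.castSucc
  else if m.val + 1 = j then ModuleCat.of ℝ (↥(V m.castSucc) × ↥(V m.succ))
  else V m.succ

/-- The corresponding subsets `U'_m ⊆ W_m`, with `U'_{j-1} = U_{j-1} × U_j`. -/
noncomputable def Uw {N : ℕ} (V : Fin (N + 1) → ModuleCat.{u} ℝ) (U : ∀ i, Set ↥(V i))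
    (j : ℕ) (m : Fin N) : Set ↥(Wm V j m) := by
  unfold Wm
  split_ifs
  · exact U m.castSucc
  · exact (U m.castSucc).prod (U m.succ)
  · exact U m.succ

/-- The canonical reassociation bijection
`c : W_0 × ⋯ × W_{N-1} → V_0 × ⋯ × V_N`. -/
noncomputable def reassoc {N : ℕ} (V : Fin (N + 1) → ModuleCat.{u} ℝ) (j : ℕ)
    (hj1 : 1 ≤ j) (hjN : j ≤ N)
    (u' : ∀ m : Fin N, ↥(Wm V j m)) (i : Fin (N + 1)) : ↥(V i) := by
  have hlt := i.isLt
  by_cases h1 : i.val + 1 < j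
  · exact cast (congrArg (fun M : ModuleCat.{u} ℝ => ↥M)
      (show Wm V j ⟨i.val, by omega⟩ = V i from if_pos h1))
      (u' ⟨i.val, by omega⟩)
  · by_cases h2 : i.val + 1 = j
    · exact (cast (congrArg (fun M : ModuleCat.{u} ℝ => ↥M)
        (show Wm V j ⟨i.val, by omega⟩ =
            ModuleCat.of ℝ (↥(V i) × ↥(V (Fin.succ ⟨i.val, by omega⟩))) from
          (if_neg h1).trans (if_pos h2)))
        (u' ⟨i.val, by omega⟩)).1
    · by_cases h3 : i.val = j
      · have hb : i.val - 1 < N := by omega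
        have hms : (⟨i.val - 1, hb⟩ : Fin N).succ = i :=
          Fin.ext (show (i.val - 1) + 1 = i.val by omega)
        exact (cast (congrArg (fun M : ModuleCat.{u} ℝ => ↥M)
          (show Wm V j ⟨i.val - 1, hb⟩ =
              ModuleCat.of ℝ (↥(V (Fin.castSucc ⟨i.val - 1, hb⟩)) × ↥(V i)) from
            ((if_neg (show ¬(i.val - 1 + 1 < j) by omega)).trans
              (if_pos (show i.val - 1 + 1 = j by omega))).trans
              (congrArg (fun M : ModuleCat.{u} ℝ =>
                  ModuleCat.of ℝ (↥(V (Fin.castSucc ⟨i.val - 1, hb⟩)) × ↥M))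
                (congrArg V hms))))
          (u' ⟨i.val - 1, hb⟩)).2
      · have hb : i.val - 1 < N := by omega
        have hms : (⟨i.val - 1, hb⟩ : Fin N).succ = i :=
          Fin.ext (show (i.val - 1) + 1 = i.val by omega)
        exact cast (congrArg (fun M : ModuleCat.{u} ℝ => ↥M)
          (show Wm V j ⟨i.val - 1, hb⟩ = V i from
            ((if_neg (show ¬(i.val - 1 + 1 < j) by omega)).trans
              (if_neg (show ¬(i.val - 1 + 1 = j) by omega))).trans
              (congrArg V hms)))
          (u' ⟨i.val - 1, hb⟩)


section MyAux

lemma my_cast_smul {M M' : ModuleCat.{u} ℝ} (h : M = M') (e : ↥M = ↥M') (c : ℝ) (x : ↥M) :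
    cast e (c • x) = c • cast e x := by subst h; rfl

lemma my_mem_mpr_iff {M M' : ModuleCat.{u} ℝ} (h : M = M') (e : Set ↥M = Set ↥M')
    (s : Set ↥M') (x : ↥M) :
    x ∈ Eq.mpr e s ↔ cast (congrArg (fun Z : ModuleCat.{u} ℝ => ↥Z) h) x ∈ s := by
  subst h; rfl

lemma my_mem_mpr2_iff {M M1 M2 : ModuleCat.{u} ℝ} (h1 : M = M1) (h2 : M1 = M2)
    (e1 : Set ↥M = Set ↥M1) (e2 : Set ↥M1 = Set ↥M2) (s : Set ↥M2) (x : ↥M) :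
    x ∈ Eq.mpr e1 (Eq.mpr e2 s)
      ↔ cast (congrArg (fun Z : ModuleCat.{u} ℝ => ↥Z) (h1.trans h2)) x ∈ s := by
  subst h1; subst h2; rfl

lemma my_Uw_closed {N : ℕ} (V : Fin (N + 1) → ModuleCat.{u} ℝ) (U : ∀ i, Set ↥(V i)) (j : ℕ)
    (hU : ∀ k, ∀ c : ℝ, 0 ≤ c → ∀ v ∈ U k, c • v ∈ U k)
    (m : Fin N) (c : ℝ) (hc : 0 ≤ c) :
    ∀ w ∈ Uw V U j m, c • w ∈ Uw V U j m := by
  unfold Uw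
  by_cases h1 : (m : ℕ) + 1 < j
  · rw [dif_pos h1]
    have hW : Wm V j m = V m.castSucc := if_pos h1
    intro w hw
    replace hw := (my_mem_mpr_iff hW _ _ w).mp hw
    refine (my_mem_mpr_iff hW _ _ _).mpr ?_
    rw [my_cast_smul hW]
    exact hU _ c hc _ hw
  · rw [dif_neg h1]
    by_cases h2 : (m : ℕ) + 1 = j
    · rw [dif_pos h2]
      have hW : Wm V j m = ModuleCat.of ℝ (↥(V m.castSucc) × ↥(V m.succ)) :=
        (if_neg h1).trans (if_pos h2)
      intro w hw
      replace hw := (my_mem_mpr2_iff (if_neg h1) (if_pos h2) _ _ _ w).mp hw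
      refine (my_mem_mpr2_iff (if_neg h1) (if_pos h2) _ _ _ _).mpr ?_
      refine (congrArg (· ∈ _) (my_cast_smul hW _ c w)).mpr ?_
      exact ⟨hU _ c hc _ hw.1, hU _ c hc _ hw.2⟩
    · rw [dif_neg h2]
      have hW : Wm V j m = V m.succ := (if_neg h1).trans (if_neg h2)
      intro w hw
      replace hw := (my_mem_mpr2_iff (if_neg h1) (if_neg h2) _ _ _ w).mp hw
      refine (my_mem_mpr2_iff (if_neg h1) (if_neg h2) _ _ _ _).mpr ?_
      refine (congrArg (· ∈ _) (my_cast_smul hW _ c w)).mpr ?_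
      exact hU _ c hc _ hw

lemma my_coface_at {N : ℕ} (j : ℕ) (hjN : j ≤ N) (t : Fin N → ℝ) :
    coface j hjN t ⟨j, by omega⟩ = 0 := by simp [coface]

lemma my_coface_succAbove {N : ℕ} (j : ℕ) (hjN : j ≤ N) (t : Fin N → ℝ) (i : Fin N) :
    coface j hjN t ((⟨j, by omega⟩ : Fin (N + 1)).succAbove i) = t i := by
  unfold coface
  rcases lt_or_ge i.val j with h | h
  · rw [Fin.succAbove_of_castSucc_lt _ _ (by simpa [Fin.lt_def] using h)]
    rw [dif_pos (by simpa using h)]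
    congr 1
  · rw [Fin.succAbove_of_le_castSucc _ _ (by simpa [Fin.le_def] using h)]
    rw [dif_neg (by simp; omega), dif_neg (by simp; omega)]
    congr 1

lemma my_succAbove_val {N : ℕ} (j : ℕ) (hjN : j ≤ N) (i : Fin N) :
    (((⟨j, by omega⟩ : Fin (N + 1)).succAbove i) : ℕ)
      = if (i : ℕ) < j then (i : ℕ) else (i : ℕ) + 1 := by
  rcases lt_or_ge i.val j with h | h
  · rw [Fin.succAbove_of_castSucc_lt _ _ (by simpa [Fin.lt_def] using h)]
    simp [h]
  · rw [Fin.succAbove_of_le_castSucc _ _ (by simpa [Fin.le_def] using h)]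
    simp [Nat.not_lt.mpr h]

lemma my_sum_le {N : ℕ} (j : ℕ) (hj1 : 1 ≤ j) (hjN : j ≤ N) (t : Fin N → ℝ) (k : Fin (N + 1))
    (k' : Fin N) (hk' : (k' : ℕ) = if (k : ℕ) < j then (k : ℕ) else (k : ℕ) - 1) :
    ∑ m ∈ Finset.univ.filter (fun m => m ≤ k), coface j hjN t m
      = ∑ m ∈ Finset.univ.filter (fun m => m ≤ k'), t m := by
  rw [Finset.sum_filter, Finset.sum_filter,
    Fin.sum_univ_succAbove _ (⟨j, by omega⟩ : Fin (N + 1)),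
    my_coface_at j hjN t, ite_self, zero_add]
  refine Finset.sum_congr rfl fun i _ => ?_
  refine if_congr ?_ (my_coface_succAbove j hjN t i) rfl
  rw [Fin.le_def, Fin.le_def, my_succAbove_val j hjN i]
  revert hk'; split_ifs <;> intro hk' <;> omega

lemma my_sum_lt {N : ℕ} (j : ℕ) (hj1 : 1 ≤ j) (hjN : j ≤ N) (t : Fin N → ℝ) (k : Fin (N + 1))
    (k' : Fin N) (hk' : (k' : ℕ) = if (k : ℕ) < j then (k : ℕ) else (k : ℕ) - 1) :
    ∑ m ∈ Finset.univ.filter (fun m => k < m), coface j hjN t m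
      = ∑ m ∈ Finset.univ.filter (fun m => k' < m), t m := by
  rw [Finset.sum_filter, Finset.sum_filter,
    Fin.sum_univ_succAbove _ (⟨j, by omega⟩ : Fin (N + 1)),
    my_coface_at j hjN t, ite_self, zero_add]
  refine Finset.sum_congr rfl fun i _ => ?_
  refine if_congr ?_ (my_coface_succAbove j hjN t i) rfl
  rw [Fin.lt_def, Fin.lt_def, my_succAbove_val j hjN i]
  revert hk'; split_ifs <;> intro hk' <;> omega

lemma my_reassoc_smul {N : ℕ} (V : Fin (N + 1) → ModuleCat.{u} ℝ) (j : ℕ)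
    (hj1 : 1 ≤ j) (hjN : j ≤ N) (c : Fin N → ℝ) (u' : ∀ m : Fin N, ↥(Wm V j m))
    (i : Fin (N + 1)) (k' : Fin N)
    (hk' : (k' : ℕ) = if (i : ℕ) < j then (i : ℕ) else (i : ℕ) - 1) :
    reassoc V j hj1 hjN (fun m => c m • u' m) i = c k' • reassoc V j hj1 hjN u' i := by
  have hlt := i.isLt
  unfold reassoc
  by_cases h1 : (i : ℕ) + 1 < j
  · obtain rfl : k' = ⟨(i : ℕ), by clear hk'; omega⟩ :=
      Fin.ext (by rw [hk', if_pos (by omega)])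
    simp only [dif_pos h1]
    exact my_cast_smul (if_pos h1) _ _ _
  · by_cases h2 : (i : ℕ) + 1 = j
    · obtain rfl : k' = ⟨(i : ℕ), by clear hk'; omega⟩ :=
        Fin.ext (by rw [hk', if_pos (by omega)])
      simp only [dif_neg h1, dif_pos h2]
      refine (congrArg Prod.fst (my_cast_smul ((if_neg h1).trans (if_pos h2)) _ _ _)).trans ?_
      rfl
    · by_cases h3 : (i : ℕ) = j
      · obtain rfl : k' = ⟨(i : ℕ) - 1, by clear hk'; omega⟩ :=
          Fin.ext (by rw [hk', if_neg (by omega)])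
        simp only [dif_neg h1, dif_neg h2, dif_pos h3]
        have hb : (i : ℕ) - 1 < N := by omega
        have hms : (⟨(i : ℕ) - 1, hb⟩ : Fin N).succ = i :=
          Fin.ext (show ((i : ℕ) - 1) + 1 = (i : ℕ) by omega)
        have hW : Wm V j ⟨(i : ℕ) - 1, hb⟩
            = ModuleCat.of ℝ (↥(V (Fin.castSucc ⟨(i : ℕ) - 1, hb⟩)) × ↥(V i)) :=
          ((if_neg (show ¬((i : ℕ) - 1 + 1 < j) by omega)).trans
            (if_pos (show (i : ℕ) - 1 + 1 = j by omega))).trans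
            (congrArg (fun M : ModuleCat.{u} ℝ =>
              ModuleCat.of ℝ (↥(V (Fin.castSucc ⟨(i : ℕ) - 1, hb⟩)) × ↥M))
              (congrArg V hms))
        refine (congrArg Prod.snd (my_cast_smul hW _ _ _)).trans ?_
        rfl
      · obtain rfl : k' = ⟨(i : ℕ) - 1, by clear hk'; omega⟩ :=
          Fin.ext (by rw [hk', if_neg (by omega)])
        simp only [dif_neg h1, dif_neg h2, dif_neg h3]
        have hb : (i : ℕ) - 1 < N := by omega
        have hms : (⟨(i : ℕ) - 1, hb⟩ : Fin N).succ = i :=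
          Fin.ext (show ((i : ℕ) - 1) + 1 = (i : ℕ) by omega)
        have hW : Wm V j ⟨(i : ℕ) - 1, hb⟩ = V i :=
          ((if_neg (show ¬((i : ℕ) - 1 + 1 < j) by omega)).trans
            (if_neg (show ¬((i : ℕ) - 1 + 1 = j) by omega))).trans (congrArg V hms)
        exact my_cast_smul hW _ _ _

end MyAux

/-- For `1 ≤ j ≤ N`, the maps `r` commute with the `j`-th coface: the subsets
`U'_m ⊆ W_m` are again closed under nonnegative scalar multiplication, and
`r^N(δ^j(t), c(u')) = (c × c)(r^{N-1}(t, u'))` for every `t ∈ Δ^{N-1}` and every `u'`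
with `u'_m ∈ U'_m`. -/
theorem r_commutes_with_jth_coface {N : ℕ} (j : ℕ) (hj1 : 1 ≤ j) (hjN : j ≤ N)
    (V : Fin (N + 1) → ModuleCat.{u} ℝ)
    [∀ k, TopologicalSpace ↥(V k)] [∀ k, IsTopologicalAddGroup ↥(V k)]
    [∀ k, ContinuousSMul ℝ ↥(V k)] [∀ k, FiniteDimensional ℝ ↥(V k)]
    (U : ∀ k, Set ↥(V k))
    (hU : ∀ k, ∀ c : ℝ, 0 ≤ c → ∀ v ∈ U k, c • v ∈ U k)
    (t : Fin N → ℝ) (ht : t ∈ stdSimplex ℝ (Fin N))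
    (u' : ∀ m : Fin N, ↥(Wm V j m)) (hu' : ∀ m, u' m ∈ Uw V U j m) :
    (∀ m : Fin N, ∀ c : ℝ, 0 ≤ c → ∀ w ∈ Uw V U j m, c • w ∈ Uw V U j m) ∧
    rmap V (coface j hjN t) (reassoc V j hj1 hjN u') =
      (reassoc V j hj1 hjN ((rmap (Wm V j) t u').1),
       reassoc V j hj1 hjN ((rmap (Wm V j) t u').2)) := by
  constructor
  · exact fun m c hc w hw => my_Uw_closed V U j hU m c hc w hw
  · have hidx : ∀ i : Fin (N + 1), (if (i : ℕ) < j then (i : ℕ) else (i : ℕ) - 1) < N := by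
      intro i; have := i.isLt; split_ifs <;> omega
    unfold rmap
    refine Prod.ext ?_ ?_ <;> funext i
    · show _ = reassoc V j hj1 hjN
        (fun m => (∑ m' ∈ Finset.univ.filter (fun m' => m' ≤ m), t m') • u' m) i
      rw [my_reassoc_smul V j hj1 hjN _ u' i ⟨_, hidx i⟩ rfl]
      exact congrArg (· • reassoc V j hj1 hjN u' i) (my_sum_le j hj1 hjN t i ⟨_, hidx i⟩ rfl)
    · show _ = reassoc V j hj1 hjN
        (fun m => (∑ m' ∈ Finset.univ.filter (fun m' => m < m'), t m') • u' m) i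
      rw [my_reassoc_smul V j hj1 hjN _ u' i ⟨_, hidx i⟩ rfl]
      exact congrArg (· • reassoc V j hj1 hjN u' i) (my_sum_lt j hj1 hjN t i ⟨_, hidx i⟩ rfl)
end

section
/- Let C and D be categories and let F ⊣ U ⊣ R be an adjoint triple, with U : C ⥤ D and F, R : D ⥤ C, so there are adjunctions F ⊣ U and U ⊣ R. Then the Eilenberg–Moore category of algebras over the monad on D whose underlying endofunctor is F ⋙ U (the monad induced by the adjunction F ⊣ U) is equivalent to the Eilenberg–Moore category of coalgebras over the comonad on D whose underlying endofunctor is R ⋙ U (the comonad induced by the adjunction U ⊣ R). -/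
open CategoryTheory

namespace AdjTripleAux

variable {C : Type*} {D : Type*} [Category C] [Category D]
    (F : D ⥤ C) (U : C ⥤ D) (R : D ⥤ C)
    (adj₁ : F ⊣ U) (adj₂ : U ⊣ R)

/-- The mate equivalence `(U(F X) ⟶ Y) ≃ (X ⟶ U(R Y))`. -/
def mate (X Y : D) : (@Quiver.Hom D CategoryStruct.toQuiver ((F ⋙ U).obj X) Y) ≃
    (@Quiver.Hom D CategoryStruct.toQuiver X ((R ⋙ U).obj Y)) :=
  (adj₂.homEquiv (F.obj X) Y).trans (adj₁.homEquiv X (R.obj Y))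

lemma mate_natural_left {X X' Y : D} (f : X ⟶ X') (a : (F ⋙ U).obj X' ⟶ Y) :
    mate F U R adj₁ adj₂ X Y ((F ⋙ U).map f ≫ a)
      = f ≫ mate F U R adj₁ adj₂ X' Y a := by
  simp [mate, Adjunction.homEquiv_naturality_left]

lemma mate_natural_right {X Y Y' : D} (a : (F ⋙ U).obj X ⟶ Y) (g : Y ⟶ Y') :
    mate F U R adj₁ adj₂ X Y' (a ≫ g)
      = mate F U R adj₁ adj₂ X Y a ≫ (R ⋙ U).map g := by
  simp [mate, Adjunction.homEquiv_naturality_right]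

lemma mate_counit {Z : C} {Y : D} (h : U.obj Z ⟶ Y) :
    mate F U R adj₁ adj₂ (U.obj Z) Y (U.map (adj₁.counit.app Z) ≫ h)
      = U.map ((adj₂.homEquiv Z Y) h) := by
  simp [mate, Adjunction.homEquiv_unit]

lemma mate_symm_unit {Y : D} {Z : C} (h : Y ⟶ U.obj Z) :
    (mate F U R adj₁ adj₂ Y (U.obj Z)).symm (h ≫ U.map (adj₂.unit.app Z))
      = U.map ((adj₁.homEquiv Y Z).symm h) := by
  simp [mate, Adjunction.homEquiv_counit]

/-- `mate_symm_unit` with indices spelled via `R ⋙ U`. -/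
lemma mate_symm_unitR {X Y : D} (h : Y ⟶ (R ⋙ U).obj X) :
    (mate F U R adj₁ adj₂ Y ((R ⋙ U).obj X)).symm (h ≫ U.map (adj₂.unit.app (R.obj X)))
      = U.map ((adj₁.homEquiv Y (R.obj X)).symm h) :=
  mate_symm_unit F U R adj₁ adj₂ h

lemma delta_app (X : D) :
    adj₂.toComonad.δ.app X = U.map (adj₂.unit.app (R.obj X)) := rfl

lemma mu_app (X : D) :
    adj₁.toMonad.μ.app X = U.map (adj₁.counit.app (F.obj X)) := rfl

lemma counit_of_unit (A : adj₁.toMonad.Algebra) :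
    mate F U R adj₁ adj₂ A.A A.A A.a ≫ adj₂.toComonad.ε.app A.A = 𝟙 A.A := by
  have h := A.unit
  dsimp [Adjunction.toMonad] at h
  erw [mate, Equiv.trans_apply]
  erw [Adjunction.homEquiv_unit, Adjunction.homEquiv_unit]
  simp [mate, Adjunction.homEquiv_unit, Adjunction.toComonad, Function.comp_apply,
    adj₂.counit_naturality, adj₂.left_triangle_components_assoc, h]
  erw [adj₂.counit_naturality, adj₂.left_triangle_components_assoc]
  exact h

lemma coassoc_of_assoc (A : adj₁.toMonad.Algebra) :
    mate F U R adj₁ adj₂ A.A A.A A.a ≫ adj₂.toComonad.δ.app A.A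
      = mate F U R adj₁ adj₂ A.A A.A A.a
        ≫ (R ⋙ U).map (mate F U R adj₁ adj₂ A.A A.A A.a) := by
  apply (mate F U R adj₁ adj₂ A.A ((R ⋙ U).obj A.A)).symm.injective
  erw [delta_app, mate_symm_unitR, ← mate_natural_right,
    Equiv.symm_apply_apply (mate F U R adj₁ adj₂ A.A ((R ⋙ U).obj A.A)),
    ← mate_natural_left,
    show (F ⋙ U).map A.a ≫ A.a = U.map (adj₁.counit.app (F.obj A.A)) ≫ A.a from A.assoc.symm,
    show (adj₁.homEquiv A.A (R.obj A.A)).symm (mate F U R adj₁ adj₂ A.A A.A A.a)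
      = (adj₂.homEquiv (F.obj A.A) A.A) A.a by erw [mate, Equiv.trans_apply, Equiv.symm_apply_apply]]
  exact (mate_counit F U R adj₁ adj₂ A.a).symm

lemma unit_of_counit (A : adj₂.toComonad.Coalgebra) :
    adj₁.toMonad.η.app A.A ≫ (mate F U R adj₁ adj₂ A.A A.A).symm A.a = 𝟙 A.A := by
  have h := A.counit
  dsimp [Adjunction.toComonad] at h
  erw [mate, Equiv.symm_trans_apply]
  erw [Adjunction.homEquiv_counit, Adjunction.homEquiv_counit]
  simp [mate, Adjunction.homEquiv_counit, Adjunction.toMonad, Function.comp_apply,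
    ← adj₁.unit_naturality_assoc, adj₁.right_triangle_components, h]
  erw [adj₁.unit_naturality_assoc, adj₁.right_triangle_components_assoc]
  exact h

lemma assoc_of_coassoc (A : adj₂.toComonad.Coalgebra) :
    adj₁.toMonad.μ.app A.A ≫ (mate F U R adj₁ adj₂ A.A A.A).symm A.a
      = (F ⋙ U).map ((mate F U R adj₁ adj₂ A.A A.A).symm A.a)
        ≫ (mate F U R adj₁ adj₂ A.A A.A).symm A.a := by
  -- from the coassociativity of the coalgebra:
  have hco : (mate F U R adj₁ adj₂ A.A A.A).symm A.a ≫ A.a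
      = U.map ((adj₁.homEquiv A.A (R.obj A.A)).symm A.a) := by
    have h : A.a ≫ U.map (adj₂.unit.app (R.obj A.A)) = A.a ≫ (R ⋙ U).map A.a := A.coassoc
    have h2 := congrArg (mate F U R adj₁ adj₂ A.A ((R ⋙ U).obj A.A)).symm h
    erw [mate_symm_unitR] at h2
    have h3 : (mate F U R adj₁ adj₂ A.A ((R ⋙ U).obj A.A)).symm (A.a ≫ (R ⋙ U).map A.a)
        = (mate F U R adj₁ adj₂ A.A A.A).symm A.a ≫ A.a := by
      apply (mate F U R adj₁ adj₂ A.A ((R ⋙ U).obj A.A)).injective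
      erw [Equiv.apply_symm_apply, mate_natural_right, Equiv.apply_symm_apply]
      rfl
    erw [h3] at h2
    exact h2.symm
  apply (mate F U R adj₁ adj₂ ((F ⋙ U).obj A.A) A.A).injective
  erw [mate_natural_left, Equiv.apply_symm_apply, hco, mu_app]
  refine (mate_counit F U R adj₁ adj₂ ((mate F U R adj₁ adj₂ A.A A.A).symm A.a)).trans ?_
  congr 1
  simp [mate]
  exact Equiv.apply_symm_apply _ _

end AdjTripleAux

open AdjTripleAux in
/-- For an adjoint triple `F ⊣ U ⊣ R` (with `U : C ⥤ D` and `F, R : D ⥤ C`), the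
Eilenberg–Moore category of algebras over the monad `F ⋙ U` on `D` induced by the
adjunction `F ⊣ U` is equivalent to the Eilenberg–Moore category of coalgebras over the
comonad `R ⋙ U` on `D` induced by the adjunction `U ⊣ R`. -/
theorem algebras_equivalent_to_coalgebras_of_adjoint_triple
    {C : Type*} {D : Type*} [Category C] [Category D]
    (F : D ⥤ C) (U : C ⥤ D) (R : D ⥤ C)
    (adj₁ : F ⊣ U) (adj₂ : U ⊣ R) :
    Nonempty (adj₁.toMonad.Algebra ≌ adj₂.toComonad.Coalgebra) := by
  refine ⟨?_⟩
  refine CategoryTheory.Equivalence.mk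
    { obj := fun A => ⟨A.A, mate F U R adj₁ adj₂ A.A A.A A.a,
        counit_of_unit F U R adj₁ adj₂ A, coassoc_of_assoc F U R adj₁ adj₂ A⟩
      map := fun {A B} f => ⟨f.f, by
        have hf : (F ⋙ U).map f.f ≫ B.a = A.a ≫ f.f := f.h
        show mate F U R adj₁ adj₂ A.A A.A A.a ≫ (R ⋙ U).map f.f
          = f.f ≫ mate F U R adj₁ adj₂ B.A B.A B.a
        erw [← mate_natural_right, ← hf, mate_natural_left]⟩
      map_id := fun A => by ext; rfl
      map_comp := fun f g => by ext; rfl }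
    { obj := fun A => ⟨A.A, (mate F U R adj₁ adj₂ A.A A.A).symm A.a,
        unit_of_counit F U R adj₁ adj₂ A, assoc_of_coassoc F U R adj₁ adj₂ A⟩
      map := fun {A B} f => ⟨f.f, by
        have hf : A.a ≫ (R ⋙ U).map f.f = f.f ≫ B.a := f.h
        show (F ⋙ U).map f.f ≫ (mate F U R adj₁ adj₂ B.A B.A).symm B.a
          = (mate F U R adj₁ adj₂ A.A A.A).symm A.a ≫ f.f
        apply (mate F U R adj₁ adj₂ A.A B.A).injective
        erw [mate_natural_left, Equiv.apply_symm_apply, mate_natural_right,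
          Equiv.apply_symm_apply, hf]
        rfl⟩
      map_id := fun A => by ext; rfl
      map_comp := fun f g => by ext; rfl }
    (NatIso.ofComponents
      (fun A => Monad.Algebra.isoMk (Iso.refl _)
        (by show (F ⋙ U).map (𝟙 A.A) ≫ (mate F U R adj₁ adj₂ A.A A.A).symm
              (mate F U R adj₁ adj₂ A.A A.A A.a) = A.a ≫ 𝟙 A.A
            simp
            exact Equiv.symm_apply_apply _ _))
      (by intros A B f
          ext
          show f.f ≫ 𝟙 B.A = 𝟙 A.A ≫ f.f
          simp))
    (NatIso.ofComponents
      (fun A => Comonad.Coalgebra.isoMk (Iso.refl _)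
        (by show mate F U R adj₁ adj₂ A.A A.A ((mate F U R adj₁ adj₂ A.A A.A).symm A.a)
              ≫ (R ⋙ U).map (𝟙 A.A) = 𝟙 A.A ≫ A.a
            erw [CategoryTheory.Functor.map_id, Category.comp_id, Category.id_comp,
              Equiv.apply_symm_apply]))
      (by intros A B f
          ext
          show f.f ≫ 𝟙 B.A = 𝟙 A.A ≫ f.f
          simp))
end
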